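/- Let Φ be a Leonard system in 𝒜 ≅ Mat_{d+1}(K) and define a_i = tr(E*_i A) for 0 ≤ i ≤ d and x_i = tr(E*_i A E*_{i−1} A) for 1 ≤ i ≤ d. Then: (i) E*_i A E*_i = a_i E*_i for 0 ≤ i ≤ d; (ii) E*_i A E*_{i−1} A E*_i = x_i E*_i for 1 ≤ i ≤ d; (iii) x_i ≠ 0 for 1 ≤ i ≤ d. -/

import Mathlib

open Matrix Polynomial

def IsTridiag {K : Type*} [Field K] {n : ℕ} (M : Matrix (Fin n) (Fin n) K) : Prop :=
  ∀ i j : Fin n, ((i : ℕ) + 1 < j ∨ (j : ℕ) + 1 < i) → M i j = 0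

def IsIrredTridiag {K : Type*} [Field K] {n : ℕ} (M : Matrix (Fin n) (Fin n) K) : Prop :=
  IsTridiag M ∧ ∀ i j : Fin n, ((i : ℕ) + 1 = j ∨ (j : ℕ) + 1 = i) → M i j ≠ 0

/-- Entry of a matrix with natural-number indices; `0` when out of range. -/
def mentry {K : Type*} [Field K] {n : ℕ} (M : Matrix (Fin n) (Fin n) K) (i j : ℕ) : K :=
  if h : i < n ∧ j < n then M ⟨i, h.1⟩ ⟨j, h.2⟩ else 0

/-- A family indexed by `Fin (d+1)` viewed as indexed by `ℕ`, with value `0` out of range. -/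
def natIdx {d : ℕ} {M : Type*} [Zero M] (E : Fin (d+1) → M) (n : ℕ) : M :=
  if h : n < d + 1 then E ⟨n, h⟩ else 0

/-- A Leonard system of diameter `d` in the matrix algebra `Mat_{d+1}(K)`:
`A`, `As` are multiplicity-free with eigenvalues `θ i`, `θs i` and primitive
idempotents `E i`, `Es i`, satisfying the tridiagonal conditions. -/
structure LeonardSystem (K : Type*) [Field K] (d : ℕ) where
  A : Matrix (Fin (d+1)) (Fin (d+1)) K
  As : Matrix (Fin (d+1)) (Fin (d+1)) K
  E : Fin (d+1) → Matrix (Fin (d+1)) (Fin (d+1)) K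
  Es : Fin (d+1) → Matrix (Fin (d+1)) (Fin (d+1)) K
  θ : Fin (d+1) → K
  θs : Fin (d+1) → K
  θ_inj : Function.Injective θ
  θs_inj : Function.Injective θs
  E_ne : ∀ i, E i ≠ 0
  Es_ne : ∀ i, Es i ≠ 0
  E_mul : ∀ i j, E i * E j = if i = j then E i else 0
  Es_mul : ∀ i j, Es i * Es j = if i = j then Es i else 0
  E_sum : ∑ i, E i = 1
  Es_sum : ∑ i, Es i = 1
  A_eq : A = ∑ i, θ i • E i
  As_eq : As = ∑ i, θs i • Es i
  EAsE_zero : ∀ i j : Fin (d+1), ((i:ℕ) + 1 < j ∨ (j:ℕ) + 1 < i) → E i * As * E j = 0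
  EAsE_ne : ∀ i j : Fin (d+1), ((i:ℕ) + 1 = j ∨ (j:ℕ) + 1 = i) → E i * As * E j ≠ 0
  EsAEs_zero : ∀ i j : Fin (d+1), ((i:ℕ) + 1 < j ∨ (j:ℕ) + 1 < i) → Es i * A * Es j = 0
  EsAEs_ne : ∀ i j : Fin (d+1), ((i:ℕ) + 1 = j ∨ (j:ℕ) + 1 = i) → Es i * A * Es j ≠ 0

/-- A Leonard pair in `Mat_{d+1}(K)`. -/
structure LeonardPair (K : Type*) [Field K] (d : ℕ) where
  A : Matrix (Fin (d+1)) (Fin (d+1)) K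
  As : Matrix (Fin (d+1)) (Fin (d+1)) K
  cond1 : ∃ P : Matrix (Fin (d+1)) (Fin (d+1)) K, IsUnit P ∧
    IsIrredTridiag (P⁻¹ * A * P) ∧ (P⁻¹ * As * P).IsDiag
  cond2 : ∃ P : Matrix (Fin (d+1)) (Fin (d+1)) K, IsUnit P ∧
    (P⁻¹ * A * P).IsDiag ∧ IsIrredTridiag (P⁻¹ * As * P)

open Matrix

section Aux

variable {K : Type*} [Field K] {n : ℕ}

lemma vv_mul_vv (u v u' v' : Fin n → K) :
    vecMulVec u v * vecMulVec u' v' = (v ⬝ᵥ u') • vecMulVec u v' := by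
  ext a b
  simp only [mul_apply, vecMulVec_apply, Matrix.smul_apply, smul_eq_mul, dotProduct, Finset.sum_mul]
  exact Finset.sum_congr rfl fun k _ => by ring

lemma vv_mul_mat (u v : Fin n → K) (M : Matrix (Fin n) (Fin n) K) :
    vecMulVec u v * M = vecMulVec u (v ᵥ* M) := by
  ext a b
  simp [mul_apply, vecMulVec_apply, vecMul, dotProduct, Finset.mul_sum, mul_assoc]

lemma trace_vv (u v : Fin n → K) : Matrix.trace (vecMulVec u v) = v ⬝ᵥ u := by
  simp [Matrix.trace, Matrix.diag, vecMulVec_apply, dotProduct, mul_comm]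

lemma key_vv (u v : Fin n → K) (M : Matrix (Fin n) (Fin n) K) :
    vecMulVec u v * M * vecMulVec u v = Matrix.trace (vecMulVec u v * M) • vecMulVec u v := by
  rw [vv_mul_mat, vv_mul_vv, trace_vv]

lemma smul_cancel_of_ne_zero {M : Matrix (Fin n) (Fin n) K} (hM : M ≠ 0) {a b : K}
    (h : a • M = b • M) : a = b := by
  have h0 : (a - b) • M = 0 := by rw [sub_smul, h, sub_self]
  rcases smul_eq_zero.mp h0 with h1 | h1
  · exact sub_eq_zero.mp h1
  · exact absurd h1 hM

lemma finrank_range_add_of_orth (e f : Matrix (Fin n) (Fin n) K)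
    (he : e * e = e) (hf : f * f = f) (hef : e * f = 0) (hfe : f * e = 0) :
    Module.finrank K (LinearMap.range (e + f).mulVecLin) =
      Module.finrank K (LinearMap.range e.mulVecLin) +
      Module.finrank K (LinearMap.range f.mulVecLin) := by
  have hker : LinearMap.ker (e + f).mulVecLin =
      LinearMap.ker e.mulVecLin ⊓ LinearMap.ker f.mulVecLin := by
    apply le_antisymm
    · intro x hx
      simp only [LinearMap.mem_ker, Matrix.mulVecLin_apply] at hx
      have h1 : e *ᵥ ((e + f) *ᵥ x) = 0 := by rw [hx, Matrix.mulVec_zero]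
      have h2 : f *ᵥ ((e + f) *ᵥ x) = 0 := by rw [hx, Matrix.mulVec_zero]
      rw [Matrix.mulVec_mulVec, Matrix.mul_add, he, hef, add_zero] at h1
      rw [Matrix.mulVec_mulVec, Matrix.mul_add, hf, hfe, zero_add] at h2
      exact ⟨by simpa using h1, by simpa using h2⟩
    · intro x hx
      rw [Submodule.mem_inf] at hx
      obtain ⟨h1, h2⟩ := hx
      simp only [LinearMap.mem_ker, Matrix.mulVecLin_apply] at h1 h2 ⊢
      rw [Matrix.add_mulVec, h1, h2, add_zero]
  have hsup : LinearMap.ker e.mulVecLin ⊔ LinearMap.ker f.mulVecLin = ⊤ := by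
    rw [eq_top_iff]
    intro x _
    rw [Submodule.mem_sup]
    refine ⟨x - e *ᵥ x, ?_, e *ᵥ x, ?_, by abel⟩
    · simp only [LinearMap.mem_ker, Matrix.mulVecLin_apply]
      rw [Matrix.mulVec_sub, Matrix.mulVec_mulVec, he, sub_self]
    · simp only [LinearMap.mem_ker, Matrix.mulVecLin_apply]
      rw [Matrix.mulVec_mulVec, hfe, Matrix.zero_mulVec]
  have rn1 := LinearMap.finrank_range_add_finrank_ker e.mulVecLin
  have rn2 := LinearMap.finrank_range_add_finrank_ker f.mulVecLin
  have rn3 := LinearMap.finrank_range_add_finrank_ker (e + f).mulVecLin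
  have hdim := Submodule.finrank_sup_add_finrank_inf_eq
    (LinearMap.ker e.mulVecLin) (LinearMap.ker f.mulVecLin)
  rw [hsup] at hdim
  rw [hker] at rn3
  rw [finrank_top] at hdim
  omega

lemma sum_finrank_range {d : ℕ} (E : Fin (d+1) → Matrix (Fin (d+1)) (Fin (d+1)) K)
    (hmul : ∀ i j, E i * E j = if i = j then E i else 0) (S : Finset (Fin (d+1))) :
    ((∑ i ∈ S, E i) * (∑ i ∈ S, E i) = ∑ i ∈ S, E i) ∧
    Module.finrank K (LinearMap.range (∑ i ∈ S, E i).mulVecLin) =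
      ∑ i ∈ S, Module.finrank K (LinearMap.range (E i).mulVecLin) := by
  induction S using Finset.induction_on with
  | empty => simp; exact Submodule.finrank_eq_zero.2 (LinearMap.range_eq_bot.2 Matrix.mulVecLin_zero)
  | insert a S ha ih =>
    obtain ⟨hidem, hrank⟩ := ih
    have hea : E a * E a = E a := by simpa using hmul a a
    have hef : E a * (∑ i ∈ S, E i) = 0 := by
      rw [Finset.mul_sum]
      refine Finset.sum_eq_zero fun i hi => ?_
      rw [hmul a i, if_neg (by rintro rfl; exact ha hi)]
    have hfe : (∑ i ∈ S, E i) * E a = 0 := by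
      rw [Finset.sum_mul]
      refine Finset.sum_eq_zero fun i hi => ?_
      rw [hmul i a, if_neg (by rintro rfl; exact ha hi)]
    rw [Finset.sum_insert ha, Finset.sum_insert ha]
    constructor
    · rw [add_mul, mul_add, mul_add, hea, hef, hfe, hidem]
      abel
    · rw [finrank_range_add_of_orth _ _ hea hidem hef hfe, hrank]

/-- Each primitive idempotent is a rank-one matrix `vecMulVec u v` with `v ⬝ᵥ u = 1`. -/
lemma exists_vv {d : ℕ} (E : Fin (d+1) → Matrix (Fin (d+1)) (Fin (d+1)) K)
    (hmul : ∀ i j, E i * E j = if i = j then E i else 0)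
    (hne : ∀ i, E i ≠ 0) (hsum : ∑ i, E i = 1) (i : Fin (d+1)) :
    ∃ u v : Fin (d+1) → K, E i = vecMulVec u v ∧ v ⬝ᵥ u = 1 := by
  set r : Fin (d+1) → ℕ := fun j => Module.finrank K (LinearMap.range (E j).mulVecLin) with hr
  have hsumr : ∑ j, r j = d + 1 := by
    have := (sum_finrank_range E hmul Finset.univ).2
    rw [hsum] at this
    rw [← this, Matrix.mulVecLin_one, LinearMap.range_id, finrank_top, Module.finrank_fin_fun]
  have hge : ∀ j, 1 ≤ r j := by
    intro j
    by_contra h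
    have h0 : r j = 0 := by omega
    rw [hr] at h0
    simp only [Submodule.finrank_eq_zero, LinearMap.range_eq_bot] at h0
    apply hne j
    ext a b
    have := congrFun (congrFun (congrArg DFunLike.coe h0) (Pi.single b 1)) a
    simpa [Matrix.mulVecLin_apply, Matrix.mulVec_single] using this
  have hr1 : r i = 1 := by
    by_contra h
    have h2 : 2 ≤ r i := by have := hge i; omega
    have hlt : ∑ j, (1 : ℕ) < ∑ j, r j :=
      Finset.sum_lt_sum (fun j _ => hge j) ⟨i, Finset.mem_univ i, by omega⟩
    simp [hsumr] at hlt
  rw [hr] at hr1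
  obtain ⟨u, hu0, hu⟩ := finrank_eq_one_iff'.mp hr1
  have hcol : ∀ b : Fin (d+1), (E i) *ᵥ Pi.single b 1 ∈ LinearMap.range (E i).mulVecLin :=
    fun b => ⟨Pi.single b 1, rfl⟩
  choose v hv using fun b => hu ⟨(E i) *ᵥ Pi.single b 1, hcol b⟩
  have hEvv : E i = vecMulVec u.val v := by
    ext a b
    have := congrFun (congrArg Subtype.val (hv b)) a
    simp only [Submodule.coe_smul_of_tower, Pi.smul_apply, smul_eq_mul,
      Matrix.mulVec_single, mul_one] at this
    rw [vecMulVec_apply, mul_comm]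
    simpa using this.symm
  refine ⟨u.val, v, hEvv, ?_⟩
  have hidem : E i * E i = E i := by simpa using hmul i i
  rw [hEvv, vv_mul_vv] at hidem
  exact smul_cancel_of_ne_zero (M := vecMulVec u.val v) (by rw [← hEvv]; exact hne i)
    (show (v ⬝ᵥ u.val) • vecMulVec u.val v = (1 : K) • vecMulVec u.val v from by
      rw [one_smul]; exact hidem)

end Aux

theorem stmt10 {K : Type*} [Field K] {d : ℕ} (L : LeonardSystem K d) :
    (∀ i : Fin (d+1),
      L.Es i * L.A * L.Es i = (Matrix.trace (L.Es i * L.A)) • L.Es i) ∧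
    (∀ i : Fin (d+1), 1 ≤ (i:ℕ) →
      L.Es i * L.A * natIdx L.Es ((i:ℕ) - 1) * L.A * L.Es i =
        (Matrix.trace (L.Es i * L.A * natIdx L.Es ((i:ℕ) - 1) * L.A)) • L.Es i) ∧
    (∀ i : Fin (d+1), 1 ≤ (i:ℕ) →
      Matrix.trace (L.Es i * L.A * natIdx L.Es ((i:ℕ) - 1) * L.A) ≠ 0) := by
  have hdec : ∀ i, ∃ u v : Fin (d+1) → K, L.Es i = vecMulVec u v ∧ v ⬝ᵥ u = 1 :=
    exists_vv L.Es L.Es_mul L.Es_ne L.Es_sum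
  refine ⟨?_, ?_, ?_⟩
  · intro i
    obtain ⟨u, v, hE, -⟩ := hdec i
    rw [hE]
    exact key_vv u v L.A
  · intro i hi
    have hj : (i:ℕ) - 1 < d + 1 := by omega
    have hnat : natIdx L.Es ((i:ℕ)-1) = L.Es ⟨(i:ℕ)-1, hj⟩ := by
      unfold natIdx; rw [dif_pos hj]
    rw [hnat]
    obtain ⟨u, v, hE, -⟩ := hdec i
    have h := key_vv u v (L.A * L.Es ⟨(i:ℕ)-1, hj⟩ * L.A)
    rw [← hE] at h
    simpa only [← mul_assoc] using h
  · intro i hi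
    have hj : (i:ℕ) - 1 < d + 1 := by omega
    set j : Fin (d+1) := ⟨(i:ℕ)-1, hj⟩ with hjdef
    have hnat : natIdx L.Es ((i:ℕ)-1) = L.Es j := by
      unfold natIdx; rw [dif_pos hj]
    rw [hnat]
    obtain ⟨u, v, hE, hnorm⟩ := hdec i
    obtain ⟨u', v', hE', hnorm'⟩ := hdec j
    have hadj : (j:ℕ) + 1 = (i:ℕ) := by
      show (i:ℕ) - 1 + 1 = (i:ℕ); omega
    have hne1 : L.Es i * L.A * L.Es j ≠ 0 := L.EsAEs_ne i j (Or.inr hadj)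
    have hne2 : L.Es j * L.A * L.Es i ≠ 0 := L.EsAEs_ne j i (Or.inl hadj)
    have he1 : L.Es i * L.A * L.Es j = ((v ᵥ* L.A) ⬝ᵥ u') • vecMulVec u v' := by
      rw [hE, hE', vv_mul_mat, vv_mul_vv]
    have he2 : L.Es j * L.A * L.Es i = ((v' ᵥ* L.A) ⬝ᵥ u) • vecMulVec u' v := by
      rw [hE, hE', vv_mul_mat, vv_mul_vv]
    set α := (v ᵥ* L.A) ⬝ᵥ u' with hαdef
    set β := (v' ᵥ* L.A) ⬝ᵥ u with hβdef
    have hα : α ≠ 0 := fun h => hne1 (by rw [he1, h, zero_smul])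
    have hβ : β ≠ 0 := fun h => hne2 (by rw [he2, h, zero_smul])
    have hjj : L.Es j * L.Es j = L.Es j := by simpa using L.Es_mul j j
    have hprod : L.Es i * L.A * L.Es j * L.A * L.Es i
        = (L.Es i * L.A * L.Es j) * (L.Es j * L.A * L.Es i) := by
      conv_lhs => rw [← hjj]
      simp only [mul_assoc]
    have hval : L.Es i * L.A * L.Es j * L.A * L.Es i = (α * β) • L.Es i := by
      rw [hprod, he1, he2, smul_mul_assoc, mul_smul_comm, vv_mul_vv, hnorm', one_smul,
        smul_smul, hE]
    have hii := key_vv u v (L.A * L.Es j * L.A)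
    rw [← hE] at hii
    have hii' : L.Es i * L.A * L.Es j * L.A * L.Es i
        = Matrix.trace (L.Es i * L.A * L.Es j * L.A) • L.Es i := by
      simpa only [← mul_assoc] using hii
    have hfin := smul_cancel_of_ne_zero (L.Es_ne i) (hii'.symm.trans hval)
    rw [hfin]
    exact mul_ne_zero hα hβ
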